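/- Let φ : ℝ^d → ℝ^d be a C²-diffeomorphism and let ρ̃ = d(φ_# L_d)/dL_d be the Radon–Nikodym density of the push-forward of Lebesgue measure under φ. Then (ρ̃^{-1} ∇ρ̃) ∘ φ = div(J_φ^{-1}), i.e. the logarithmic gradient of ρ̃ composed with φ equals the columnwise divergence of the inverse Jacobian matrix. -/

import Mathlib

open MeasureTheory Metric Real

noncomputable section

abbrev Ed (d : ℕ) := EuclideanSpace ℝ (Fin d)



lemma detRow_bound {d : ℕ} (m : Fin d → Fin d → ℝ) :
    ‖(Matrix.detRowAlternating (R := ℝ) (n := Fin d)) m‖ ≤ (d.factorial : ℝ) * ∏ i, ‖m i‖ := by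
  have h0 : (Matrix.detRowAlternating (R := ℝ) (n := Fin d)) m = (Matrix.of m).det := rfl
  rw [h0, Matrix.det_apply]
  calc ‖∑ σ : Equiv.Perm (Fin d), Equiv.Perm.sign σ • ∏ i, Matrix.of m (σ i) i‖
      ≤ ∑ σ : Equiv.Perm (Fin d), ‖Equiv.Perm.sign σ • ∏ i, Matrix.of m (σ i) i‖ :=
        norm_sum_le _ _
    _ ≤ ∑ _σ : Equiv.Perm (Fin d), ∏ i, ‖m i‖ := by
        refine Finset.sum_le_sum fun σ _ => ?_
        have h1 : ‖Equiv.Perm.sign σ • ∏ i, Matrix.of m (σ i) i‖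
            = ‖∏ i, Matrix.of m (σ i) i‖ := by
          rcases Int.units_eq_one_or (Equiv.Perm.sign σ) with h | h <;> rw [h] <;> simp
        rw [h1]
        calc ‖∏ i, Matrix.of m (σ i) i‖ = ∏ i, ‖m (σ i) i‖ := by
              rw [Real.norm_eq_abs, Finset.abs_prod]; rfl
          _ ≤ ∏ i, ‖m (σ i)‖ :=
              Finset.prod_le_prod (fun i _ => norm_nonneg _)
                (fun i _ => norm_le_pi_norm (m (σ i)) i)
          _ = ∏ i, ‖m i‖ := Equiv.prod_comp σ fun i => ‖m i‖
    _ = (d.factorial : ℝ) * ∏ i, ‖m i‖ := by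
        rw [Finset.sum_const]; simp [Fintype.card_perm]

def detCM (d : ℕ) : ContinuousMultilinearMap ℝ (fun _ : Fin d => (Fin d → ℝ)) ℝ :=
  MultilinearMap.mkContinuous
    (Matrix.detRowAlternating (R := ℝ) (n := Fin d)).toMultilinearMap
    (d.factorial) (fun m => detRow_bound m)

lemma det_updateRow_eq {d : ℕ} (A : Matrix (Fin d) (Fin d) ℝ) (c : Fin d) (u : Fin d → ℝ) :
    (A.updateRow c u).det = ∑ b, A.adjugate b c * u b := by
  rw [← Matrix.det_transpose, ← Matrix.updateCol_transpose, ← Matrix.cramer_apply,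
    Matrix.cramer_eq_adjugate_mulVec]
  simp only [Matrix.mulVec, dotProduct, ← Matrix.adjugate_transpose,
    Matrix.transpose_apply]

theorem stmt4' {d : ℕ} (φ : Ed d → Ed d)
    (hφ : ContDiff ℝ 2 φ)
    (J K : Ed d → Matrix (Fin d) (Fin d) ℝ)
    (hJ : ∀ x i j, J x i j = fderiv ℝ φ x (EuclideanSpace.single j 1) i)
    (hdet : ∀ x, (J x).det ≠ 0)
    (hK : ∀ x, K x = (J x)⁻¹)
    (ρt : Ed d → ℝ) (hρdiff : Differentiable ℝ ρt)
    (hρφ : ∀ x, ρt (φ x) = (K x).det) (hKpos : ∀ x, 0 < (K x).det) :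
    ∀ (x : Ed d) (i : Fin d),
      (ρt (φ x))⁻¹ * fderiv ℝ ρt (φ x) (EuclideanSpace.single i 1)
        = ∑ j, fderiv ℝ (fun y => K y j i) x (EuclideanSpace.single j 1) := by
  intro x i
  classical
  have hφd : Differentiable ℝ φ := hφ.differentiable (by norm_num)
  have hf2d : Differentiable ℝ (fderiv ℝ φ) :=
    (hφ.fderiv_right (m := 1) (by norm_num)).differentiable (by norm_num)
  set e : Fin d → Ed d := fun j => EuclideanSpace.single j (1:ℝ) with he
  set D2 := fderiv ℝ (fderiv ℝ φ) x with hD2def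
  have hD2 : HasFDerivAt (fderiv ℝ φ) D2 x := (hf2d x).hasFDerivAt
  set S : Fin d → Fin d → Fin d → ℝ := fun j b a => D2 (e j) (e b) a with hS
  have hSsymm : ∀ j b a, S j b a = S b j a := by
    intro j b a
    have h := ((hφ.contDiffAt (x := x)).isSymmSndFDerivAt (by norm_num)) (e j) (e b)
    simp only [hS, ← hD2def] at h ⊢
    rw [h]
  set LL : Fin d → Fin d → ((Ed d →L[ℝ] Ed d) →L[ℝ] ℝ) := fun a b =>
    (EuclideanSpace.proj a).comp ((ContinuousLinearMap.apply ℝ (Ed d)) (e b)) with hLL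
  have hJder : ∀ a b, HasFDerivAt (fun y => J y a b) ((LL a b).comp D2) x := by
    intro a b
    have h1 : (fun y => J y a b) = fun y => LL a b (fderiv ℝ φ y) := by
      funext y; simp [hLL, hJ]; rfl
    rw [h1]
    exact ((LL a b).hasFDerivAt).comp x hD2
  have hJderval : ∀ a b j, fderiv ℝ (fun y => J y a b) x (e j) = S j b a := by
    intro a b j; rw [(hJder a b).fderiv]; rfl
  set g : Fin d → Ed d → (Fin d → ℝ) := fun a y b => J y a b with hg
  set g' : Fin d → (Ed d →L[ℝ] (Fin d → ℝ)) := fun a =>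
    ContinuousLinearMap.pi (fun b => (LL a b).comp D2) with hg'
  have hgder : ∀ a, HasFDerivAt (g a) (g' a) x := fun a =>
    hasFDerivAt_pi.2 (fun b => hJder a b)
  have hdetJder : HasFDerivAt (fun y => (J y).det)
      (∑ a, ((detCM d).toContinuousLinearMap (fun c => g c x) a) ∘L (g' a)) x := by
    have h2 : (fun y => (J y).det) = fun y => detCM d (fun a => g a y) := rfl
    rw [h2]
    exact HasFDerivAt.multilinear_comp (f := detCM d) hgder
  set A := J x with hA
  set B := K x with hB
  have hABu : IsUnit A.det := isUnit_iff_ne_zero.2 (hdet x)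
  have hAB : A * B = 1 := by rw [hB, hK]; exact Matrix.mul_nonsing_inv _ hABu
  have hdetB : B.det = (A.det)⁻¹ := by
    rw [hB, hK, Matrix.det_nonsing_inv, Ring.inverse_eq_inv']
  have hdetBne : B.det ≠ 0 := ne_of_gt (hKpos x)
  have hadjB : ∀ b a, A.adjugate b a = A.det * B b a := by
    intro b a
    rw [hB, hK, Matrix.inv_def]
    simp only [Matrix.smul_apply, smul_eq_mul, Ring.inverse_eq_inv']
    rw [← mul_assoc, mul_inv_cancel₀ (hdet x), one_mul]
  -- value of derivative of det ∘ J
  set Sg : Fin d → ℝ := fun j => ∑ a, ∑ b, B b a * S j b a with hSg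
  have hdetJval : ∀ j, fderiv ℝ (fun y => (J y).det) x (e j) = A.det * Sg j := by
    intro j
    rw [hdetJder.fderiv]
    have h3 : ∀ a : Fin d,
        (((detCM d).toContinuousLinearMap (fun c => g c x) a) ∘L (g' a)) (e j)
          = (A.updateRow a (fun b => S j b a)).det := by
      intro a
      have h4 : g' a (e j) = fun b => S j b a := rfl
      show ((detCM d).toContinuousLinearMap (fun c => g c x) a) (g' a (e j)) = _
      rw [h4]
      rfl
    rw [ContinuousLinearMap.coe_sum', Finset.sum_apply,
      Finset.sum_congr rfl fun a _ => h3 a]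
    rw [Finset.sum_congr rfl fun a _ => det_updateRow_eq A a (fun b => S j b a)]
    rw [hSg, Finset.mul_sum]
    refine Finset.sum_congr rfl fun a _ => ?_
    rw [Finset.mul_sum]
    exact Finset.sum_congr rfl fun b _ => by rw [hadjB]; ring
  -- derivative of det ∘ K
  have hdetKfun : (fun y => (K y).det) = fun y => ((J y).det)⁻¹ := by
    funext y; rw [hK, Matrix.det_nonsing_inv, Ring.inverse_eq_inv']
  have hdetKdiff : DifferentiableAt ℝ (fun y => (K y).det) x := by
    rw [hdetKfun]; exact hdetJder.differentiableAt.inv (hdet x)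
  have hdetKval : ∀ j, fderiv ℝ (fun y => (K y).det) x (e j) = -(B.det * Sg j) := by
    intro j
    have hconst : (fun y => (K y).det * (J y).det) = fun _ => (1:ℝ) := by
      funext y
      rw [hK, Matrix.det_nonsing_inv, Ring.inverse_eq_inv']
      exact inv_mul_cancel₀ (hdet y)
    have h0 : fderiv ℝ (fun y => (K y).det * (J y).det) x = 0 := by
      rw [hconst]; exact fderiv_const_apply 1
    rw [fderiv_fun_mul hdetKdiff hdetJder.differentiableAt] at h0
    have h5 := congrArg (fun (T : Ed d →L[ℝ] ℝ) => T (e j)) h0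
    simp only [ContinuousLinearMap.add_apply, ContinuousLinearMap.coe_smul',
      Pi.smul_apply, smul_eq_mul, ContinuousLinearMap.zero_apply] at h5
    rw [hdetJval j] at h5
    -- h5 : (K x).det * (A.det * Sg j) + (J x).det * fderiv (detK) x (e j) = 0
    have h6 : B.det * (A.det * Sg j) + A.det * fderiv ℝ (fun y => (K y).det) x (e j) = 0 := h5
    have h8 : A.det * fderiv ℝ (fun y => (K y).det) x (e j)
        = A.det * -(B.det * Sg j) := by linear_combination h6
    exact mul_left_cancel₀ (hdet x) h8
  -- chain rule for ρt
  have hρcomp : ∀ v, fderiv ℝ ρt (φ x) (fderiv ℝ φ x v)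
      = fderiv ℝ (fun y => (K y).det) x v := by
    intro v
    have h1 : fderiv ℝ (ρt ∘ φ) x = (fderiv ℝ ρt (φ x)).comp (fderiv ℝ φ x) :=
      fderiv_comp x (hρdiff _) (hφd x)
    have h2 : (ρt ∘ φ) = fun y => (K y).det := funext fun y => hρφ y
    rw [← h2, h1]; rfl
  have hei : fderiv ℝ φ x (∑ j, B j i • e j) = e i := by
    rw [map_sum]
    refine PiLp.ext fun a => ?_
    have h4 : (∑ j, fderiv ℝ φ x (B j i • e j)) a
        = ∑ j, (fderiv ℝ φ x (B j i • e j)) a := by rw [WithLp.ofLp_sum]; exact Finset.sum_apply a Finset.univ _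
    rw [h4]
    have h5 : ∀ j, (fderiv ℝ φ x (B j i • e j)) a = A a j * B j i := by
      intro j
      rw [_root_.map_smul]
      have h6 : (fderiv ℝ φ x (e j)) a = A a j := (hJ x a j).symm
      calc (B j i • fderiv ℝ φ x (e j)) a = B j i * (fderiv ℝ φ x (e j)) a := rfl
        _ = A a j * B j i := by rw [h6]; ring
    rw [Finset.sum_congr rfl fun j _ => h5 j]
    have h6 : ∑ j, A a j * B j i = (A * B) a i := (Matrix.mul_apply).symm
    rw [h6, hAB]
    simp [he, Matrix.one_apply, EuclideanSpace.single_apply, eq_comm]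
  have hLHS : fderiv ℝ ρt (φ x) (e i) = -∑ j, B j i * (B.det * Sg j) := by
    rw [← hei, hρcomp, map_sum]
    rw [← Finset.sum_neg_distrib]
    refine Finset.sum_congr rfl fun j _ => ?_
    rw [_root_.map_smul, smul_eq_mul, hdetKval j]
    ring
  -- K entries differentiability
  have hKdiff : ∀ a c, DifferentiableAt ℝ (fun y => K y a c) x := by
    intro a c
    set gt : Fin d → Ed d → (Fin d → ℝ) := fun m =>
      if m = c then (fun _ => Pi.single a (1:ℝ)) else g m with hgt
    set gt' : Fin d → (Ed d →L[ℝ] (Fin d → ℝ)) := fun m =>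
      if m = c then 0 else g' m with hgt'
    have hgtder : ∀ m, HasFDerivAt (gt m) (gt' m) x := by
      intro m
      by_cases h : m = c
      · simp only [hgt, hgt', h, if_pos rfl]; exact hasFDerivAt_const _ _
      · simp only [hgt, hgt', if_neg h]; exact hgder m
    have heq : (fun y => K y a c)
        = fun y => ((J y).det)⁻¹ * detCM d (fun m => gt m y) := by
      funext y
      rw [hK, Matrix.inv_def]
      simp only [Matrix.smul_apply, smul_eq_mul, Ring.inverse_eq_inv',
        Matrix.adjugate_apply]
      congr 1
      show ((J y).updateRow c (Pi.single a 1)).det = (Matrix.of fun m => gt m y).det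
      congr 1
      funext m b
      by_cases h : m = c
      · subst h
        simp [hgt, Matrix.updateRow_self]
      · simp [hgt, h, Matrix.updateRow_ne h]; rfl
    rw [heq]
    exact (hdetJder.differentiableAt.inv (hdet x)).mul
      (HasFDerivAt.multilinear_comp (f := detCM d) hgtder).differentiableAt
  -- differentiate the identity K * J = 1
  have hIdent : ∀ a b j,
      ∑ c, (fderiv ℝ (fun y => K y a c) x (e j)) * A c b
        = -∑ c, B a c * S j b c := by
    intro a b j
    have hconst : (fun y => ∑ c, K y a c * J y c b)
        = fun _ => (1 : Matrix (Fin d) (Fin d) ℝ) a b := by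
      funext y
      rw [← Matrix.mul_apply, hK, Matrix.nonsing_inv_mul _ (isUnit_iff_ne_zero.2 (hdet y))]
    have h0 : fderiv ℝ (fun y => ∑ c, K y a c * J y c b) x = 0 := by
      rw [hconst]; exact fderiv_const_apply _
    have hsum : fderiv ℝ (fun y => ∑ c, K y a c * J y c b) x
        = ∑ c, fderiv ℝ (fun y => K y a c * J y c b) x :=
      fderiv_fun_sum (fun c _ => ((hKdiff a c).mul (hJder c b).differentiableAt))
    have h1 : ∀ c : Fin d, fderiv ℝ (fun y => K y a c * J y c b) x
        = K x a c • fderiv ℝ (fun y => J y c b) x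
          + J x c b • fderiv ℝ (fun y => K y a c) x :=
      fun c => fderiv_fun_mul (hKdiff a c) (hJder c b).differentiableAt
    have h2 := congrArg (fun (T : Ed d →L[ℝ] ℝ) => T (e j)) (hsum.symm.trans h0)
    simp only [ContinuousLinearMap.coe_sum', Finset.sum_apply,
      ContinuousLinearMap.zero_apply] at h2
    have h3 : ∑ c, (B a c * S j b c + A c b * fderiv ℝ (fun y => K y a c) x (e j)) = 0 := by
      rw [← h2]
      refine Finset.sum_congr rfl fun c _ => ?_
      rw [h1 c]
      simp only [ContinuousLinearMap.add_apply, ContinuousLinearMap.coe_smul',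
        Pi.smul_apply, smul_eq_mul]
      rw [hJderval c b j]
    rw [Finset.sum_add_distrib] at h3
    have h4 : ∑ c, A c b * fderiv ℝ (fun y => K y a c) x (e j)
        = -∑ c, B a c * S j b c := by linarith
    rw [← h4]
    exact Finset.sum_congr rfl fun c _ => by ring
  -- solve for the derivative of K entries in column i
  have hDK : ∀ a j, fderiv ℝ (fun y => K y a i) x (e j)
      = -∑ b, ∑ c, B a c * S j b c * B b i := by
    intro a j
    have h1 : fderiv ℝ (fun y => K y a i) x (e j)
        = ∑ c, fderiv ℝ (fun y => K y a c) x (e j) * ((1 : Matrix (Fin d) (Fin d) ℝ) c i) := by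
      simp [Matrix.one_apply]
    rw [h1, ← hAB]
    have h2 : ∀ c : Fin d, fderiv ℝ (fun y => K y a c) x (e j) * ((A * B) c i)
        = ∑ b, (fderiv ℝ (fun y => K y a c) x (e j) * A c b) * B b i := by
      intro c
      rw [Matrix.mul_apply, Finset.mul_sum]
      exact Finset.sum_congr rfl fun b _ => by ring
    rw [Finset.sum_congr rfl fun c _ => h2 c, Finset.sum_comm]
    have h3 : ∀ b : Fin d,
        ∑ c, (fderiv ℝ (fun y => K y a c) x (e j) * A c b) * B b i
          = (-∑ c, B a c * S j b c) * B b i := by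
      intro b
      rw [← Finset.sum_mul, hIdent a b j]
    rw [Finset.sum_congr rfl fun b _ => h3 b]
    rw [← Finset.sum_neg_distrib]
    refine Finset.sum_congr rfl fun b _ => ?_
    rw [neg_mul, Finset.sum_mul]
  -- final assembly
  show (ρt (φ x))⁻¹ * fderiv ℝ ρt (φ x) (e i)
      = ∑ j, fderiv ℝ (fun y => K y j i) x (e j)
  rw [hLHS, hρφ x, ← hB]
  rw [Finset.sum_congr rfl fun j _ => hDK j j]
  have hfactor : (B.det)⁻¹ * -∑ j, B j i * (B.det * Sg j) = -∑ j, B j i * Sg j := by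
    have h1 : ∑ j, B j i * (B.det * Sg j) = B.det * ∑ j, B j i * Sg j := by
      rw [Finset.mul_sum]
      exact Finset.sum_congr rfl fun j _ => by ring
    rw [h1, ← mul_neg, ← mul_assoc, inv_mul_cancel₀ hdetBne, one_mul]
  rw [hfactor]
  have hkey : ∑ j, B j i * Sg j = ∑ j, ∑ b, ∑ c, B j c * S j b c * B b i := by
    calc ∑ j, B j i * Sg j
        = ∑ j, ∑ a, ∑ b, B j i * (B b a * S j b a) := by
          refine Finset.sum_congr rfl fun j _ => ?_
          rw [hSg, Finset.mul_sum]
          exact Finset.sum_congr rfl fun a _ => by rw [Finset.mul_sum]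
      _ = ∑ j, ∑ b, ∑ a, B j i * (B b a * S j b a) :=
          Finset.sum_congr rfl fun j _ => Finset.sum_comm
      _ = ∑ b, ∑ j, ∑ a, B j i * (B b a * S j b a) := Finset.sum_comm
      _ = ∑ j, ∑ b, ∑ c, B j c * S j b c * B b i := by
          refine Finset.sum_congr rfl fun jj _ => ?_
          refine Finset.sum_congr rfl fun bb _ => ?_
          refine Finset.sum_congr rfl fun cc _ => ?_
          rw [hSsymm bb jj cc]
          ring
  rw [hkey, Finset.sum_neg_distrib]

/-- let `φ` be a `C²`-diffeomorphism and `ρt = d(φ_# L_d)/dL_d` the density of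
the push-forward of Lebesgue measure, so that `ρt ∘ φ = det(J_φ⁻¹)` (assumed positive). Then
`(ρt⁻¹ ∇ρt) ∘ φ = div(J_φ⁻¹)`: the logarithmic gradient of `ρt` composed with `φ` equals the
columnwise divergence of the inverse Jacobian matrix `K = J_φ⁻¹`. -/
theorem stmt4 {d : ℕ} (φ φinv : Ed d → Ed d)
    (hφ : ContDiff ℝ 2 φ) (hφinv : ContDiff ℝ 2 φinv)
    (hleft : Function.LeftInverse φinv φ) (hright : Function.RightInverse φinv φ)
    (J K : Ed d → Matrix (Fin d) (Fin d) ℝ)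
    (hJ : ∀ x i j, J x i j = fderiv ℝ φ x (EuclideanSpace.single j 1) i)
    (hdet : ∀ x, (J x).det ≠ 0)
    (hK : ∀ x, K x = (J x)⁻¹)
    (ρt : Ed d → ℝ) (hρdiff : Differentiable ℝ ρt)
    (hdens : Measure.map φ (volume : Measure (Ed d))
      = (volume : Measure (Ed d)).withDensity (fun x => ENNReal.ofReal (ρt x)))
    (hρφ : ∀ x, ρt (φ x) = (K x).det) (hKpos : ∀ x, 0 < (K x).det) :
    ∀ (x : Ed d) (i : Fin d),
      (ρt (φ x))⁻¹ * fderiv ℝ ρt (φ x) (EuclideanSpace.single i 1)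
        = ∑ j, fderiv ℝ (fun y => K y j i) x (EuclideanSpace.single j 1) := by
  exact stmt4' φ hφ J K hJ hdet hK ρt hρdiff hρφ hKpos
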